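/- Suppose λ, λ′ ∈ [0, 1/2), μ₁ ≠ μ₂ and μ₁′ ≠ μ₂′ are real numbers, and F, F′ are cumulative distribution functions of symmetric distributions, such that λF(x−μ₁) + (1−λ)F(x−μ₂) = λ′F′(x−μ₁′) + (1−λ′)F′(x−μ₂′) for all x ∈ ℝ. Then λ = λ′, μ₂ = μ₂′ and F = F′; moreover, if λ > 0 then also μ₁ = μ₁′. (Identifiability of the two-component shifted symmetric mixture model.) -/

import Mathlib

open MeasureTheory Filter

private lemma hdsin (a X t : ℝ) :
    HasDerivAt (fun t => a * Real.sin (X * t)) (a * X * Real.cos (X * t)) t := by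
  have h1 : HasDerivAt (fun t : ℝ => X * t) X t := by
    simpa using (hasDerivAt_id t).const_mul X
  have h2 := (Real.hasDerivAt_sin (X * t)).comp t h1
  have h3 := h2.const_mul a
  exact h3.congr_deriv (by ring)

private lemma hdcos (a X t : ℝ) :
    HasDerivAt (fun t => a * Real.cos (X * t)) (-(a * X) * Real.sin (X * t)) t := by
  have h1 : HasDerivAt (fun t : ℝ => X * t) X t := by
    simpa using (hasDerivAt_id t).const_mul X
  have h2 := (Real.hasDerivAt_cos (X * t)).comp t h1
  have h3 := h2.const_mul a
  exact h3.congr_deriv (by ring)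

private lemma ev_deriv {u v : ℝ → ℝ} (hu : ∀ t, HasDerivAt u (v t) t)
    (h : ∀ᶠ t in nhds (0:ℝ), u t = 0) : ∀ᶠ t in nhds (0:ℝ), v t = 0 := by
  have h' : ∀ᶠ t in nhds (0:ℝ), ∀ᶠ s in nhds t, u s = 0 := h.eventually_nhds
  filter_upwards [h'] with t ht
  have : deriv u t = deriv (fun _ => (0:ℝ)) t := Filter.EventuallyEq.deriv_eq ht
  rw [(hu t).deriv] at this
  simpa using this

private lemma step (a1 a2 a3 a4 X1 X2 X3 X4 : ℝ)
    (h : ∀ᶠ t in nhds (0:ℝ),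
      a1 * Real.sin (X1 * t) + a2 * Real.sin (X2 * t)
      + a3 * Real.sin (X3 * t) + a4 * Real.sin (X4 * t) = 0) :
    (a1 * X1 + a2 * X2 + a3 * X3 + a4 * X4 = 0) ∧
    ∀ᶠ t in nhds (0:ℝ),
      (-(a1 * X1^2)) * Real.sin (X1 * t) + (-(a2 * X2^2)) * Real.sin (X2 * t)
      + (-(a3 * X3^2)) * Real.sin (X3 * t) + (-(a4 * X4^2)) * Real.sin (X4 * t) = 0 := by
  have hu : ∀ t, HasDerivAt (fun t =>
      a1 * Real.sin (X1 * t) + a2 * Real.sin (X2 * t)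
      + a3 * Real.sin (X3 * t) + a4 * Real.sin (X4 * t))
      (a1 * X1 * Real.cos (X1 * t) + a2 * X2 * Real.cos (X2 * t)
      + a3 * X3 * Real.cos (X3 * t) + a4 * X4 * Real.cos (X4 * t)) t := fun t =>
    (((hdsin a1 X1 t).add (hdsin a2 X2 t)).add (hdsin a3 X3 t)).add (hdsin a4 X4 t)
  have hv : ∀ t, HasDerivAt (fun t =>
      a1 * X1 * Real.cos (X1 * t) + a2 * X2 * Real.cos (X2 * t)
      + a3 * X3 * Real.cos (X3 * t) + a4 * X4 * Real.cos (X4 * t))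
      ((-(a1 * X1 * X1)) * Real.sin (X1 * t) + (-(a2 * X2 * X2)) * Real.sin (X2 * t)
      + (-(a3 * X3 * X3)) * Real.sin (X3 * t) + (-(a4 * X4 * X4)) * Real.sin (X4 * t)) t := by
    intro t
    have := (((hdcos (a1 * X1) X1 t).add (hdcos (a2 * X2) X2 t)).add
      (hdcos (a3 * X3) X3 t)).add (hdcos (a4 * X4) X4 t)
    exact this
  have h1 := ev_deriv hu h
  have h2 := ev_deriv hv h1
  constructor
  · have := h1.self_of_nhds
    simpa using this
  · filter_upwards [h2] with t ht
    calc _ = (-(a1 * X1 * X1)) * Real.sin (X1 * t) + (-(a2 * X2 * X2)) * Real.sin (X2 * t)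
      + (-(a3 * X3 * X3)) * Real.sin (X3 * t) + (-(a4 * X4 * X4)) * Real.sin (X4 * t) := by ring
    _ = 0 := ht

private lemma extract (a1 a2 a3 a4 X1 X2 X3 X4 : ℝ)
    (h : ∀ᶠ t in nhds (0:ℝ),
      a1 * Real.sin (X1 * t) + a2 * Real.sin (X2 * t)
      + a3 * Real.sin (X3 * t) + a4 * Real.sin (X4 * t) = 0) :
    (a1 * X1 + a2 * X2 + a3 * X3 + a4 * X4 = 0) ∧
    (a1 * X1^3 + a2 * X2^3 + a3 * X3^3 + a4 * X4^3 = 0) ∧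
    (a1 * X1^5 + a2 * X2^5 + a3 * X3^5 + a4 * X4^5 = 0) ∧
    (a1 * X1^7 + a2 * X2^7 + a3 * X3^7 + a4 * X4^7 = 0) := by
  obtain ⟨e1, h2⟩ := step _ _ _ _ _ _ _ _ h
  obtain ⟨e3, h4⟩ := step _ _ _ _ _ _ _ _ h2
  obtain ⟨e5, h6⟩ := step _ _ _ _ _ _ _ _ h4
  obtain ⟨e7, -⟩ := step _ _ _ _ _ _ _ _ h6
  exact ⟨e1, by linear_combination -e3, by linear_combination e5, by linear_combination -e7⟩

private lemma two_term (q C D : ℝ) (hq0 : 0 < q) (hq : q < 1/2) (hCD : C ≠ D)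
    (e1 : q*C + (1-q)*D = 0) (e3 : q*C^3 + (1-q)*D^3 = 0) : False := by
  have key : q*(C*((C-D)*(C+D))) = 0 := by linear_combination e3 - D^2*e1
  have h1 : C*((C-D)*(C+D)) = 0 := (mul_eq_zero.mp key).resolve_left (ne_of_gt hq0)
  rcases mul_eq_zero.mp h1 with h | h
  · -- C = 0
    subst h
    have hD : D = 0 := by
      have : (1-q)*D = 0 := by linarith
      have h1q : (0:ℝ) < 1 - q := by linarith
      exact (mul_eq_zero.mp this).resolve_left (ne_of_gt h1q)
    exact hCD (by rw [hD])
  · rcases mul_eq_zero.mp h with h | h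
    · exact hCD (by linarith)
    · -- C + D = 0
      have hC : C = 0 := by
        have h2 : (2*q-1)*C = 0 := by linear_combination e1 + q*h - h
        have : 2*q - 1 ≠ 0 := by intro h3; linarith
        exact (mul_eq_zero.mp h2).resolve_left this
      have hD : D = 0 := by linarith
      exact hCD (by rw [hC, hD])

private lemma final_part (p q A C D : ℝ)
    (hpq : 0 < p*q) (ha4 : 0 < (1-p)*(1-q)) (hsum : p + q < 1)
    (hA2 : A^2 < C^2) (hD2 : D^2 < C^2)
    (EA : p*q*(A*(A^2-C^2)) + (1-p)*(1-q)*(D*(D^2-C^2)) = 0)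
    (EA3 : p*q*(A^3*(A^2-C^2)) + (1-p)*(1-q)*(D^3*(D^2-C^2)) = 0) :
    A = 0 ∧ D = 0 := by
  have hAC2 : A^2 - C^2 ≠ 0 := by nlinarith
  have hDC2 : D^2 - C^2 ≠ 0 := by nlinarith
  have key : (p*q*(A*(A^2-C^2)))*((A-D)*(A+D)) = 0 := by linear_combination EA3 - D^2*EA
  have hA0toD0 : A = 0 → D = 0 := by
    intro hA
    subst hA
    have h1 : (1-p)*(1-q)*(D*(D^2-C^2)) = 0 := by linear_combination EA
    have h2 : D*(D^2-C^2) = 0 := (mul_eq_zero.mp h1).resolve_left (ne_of_gt ha4)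
    exact (mul_eq_zero.mp h2).resolve_right hDC2
  rcases mul_eq_zero.mp key with h | h
  · have h1 : A*(A^2-C^2) = 0 := (mul_eq_zero.mp h).resolve_left (ne_of_gt hpq)
    have hA : A = 0 := (mul_eq_zero.mp h1).resolve_right hAC2
    exact ⟨hA, hA0toD0 hA⟩
  · rcases mul_eq_zero.mp h with h | h
    · -- A = D
      have hAD : A = D := by linarith
      have h1 : (p*q + (1-p)*(1-q))*(A*(A^2-C^2)) = 0 := by
        rw [hAD] at EA ⊢; linear_combination EA
      have h2 : A*(A^2-C^2) = 0 :=
        (mul_eq_zero.mp h1).resolve_left (by positivity)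
      have hA : A = 0 := (mul_eq_zero.mp h2).resolve_right hAC2
      exact ⟨hA, hA0toD0 hA⟩
    · -- A = -D
      have hAD : D = -A := by linarith
      have h1 : (p*q - (1-p)*(1-q))*(A*(A^2-C^2)) = 0 := by
        rw [hAD] at EA; linear_combination EA
      have hne : p*q - (1-p)*(1-q) ≠ 0 := by intro h2; nlinarith
      have h2 : A*(A^2-C^2) = 0 := (mul_eq_zero.mp h1).resolve_left hne
      have hA : A = 0 := (mul_eq_zero.mp h2).resolve_right hAC2
      exact ⟨hA, hA0toD0 hA⟩

private lemma mainA (p q A B C D : ℝ)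
    (hp0 : 0 < p) (hp : p < 1/2) (hq0 : 0 < q) (hq : q < 1/2)
    (hrel : A + D = B + C) (hAB : A ≠ B) (hACl : A < C)
    (S1 : p*q*A + p*(1-q)*B + (1-p)*q*C + (1-p)*(1-q)*D = 0)
    (S3 : p*q*A^3 + p*(1-q)*B^3 + (1-p)*q*C^3 + (1-p)*(1-q)*D^3 = 0)
    (S5 : p*q*A^5 + p*(1-q)*B^5 + (1-p)*q*C^5 + (1-p)*(1-q)*D^5 = 0)
    (S7 : p*q*A^7 + p*(1-q)*B^7 + (1-p)*q*C^7 + (1-p)*(1-q)*D^7 = 0) :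
    p = q ∧ D = 0 ∧ A = 0 := by
  have hpq : 0 < p*q := mul_pos hp0 hq0
  have hq1 : (0:ℝ) < 1 - q := by linarith
  have hp1 : (0:ℝ) < 1 - p := by linarith
  have ha2 : 0 < p*(1-q) := mul_pos hp0 hq1
  have ha3 : 0 < (1-p)*q := mul_pos hp1 hq0
  have ha4 : 0 < (1-p)*(1-q) := mul_pos hp1 hq1
  have hsum : p + q < 1 := by linarith
  rcases lt_or_gt_of_ne hAB with hABl | hBAl
  · -- A < B and A < C : contradiction.  A strict min, D strict max.
    exfalso
    have hAD : A < D := by linarith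
    have hDB : B < D := by linarith
    have hDC : C < D := by linarith
    -- A < 0
    have hAneg : A < 0 := by
      by_contra hh
      push_neg at hh
      have e1 : p*q*A + p*(1-q)*A + (1-p)*q*A + (1-p)*(1-q)*A = A := by ring
      linarith [mul_lt_mul_of_pos_left hABl ha2, mul_lt_mul_of_pos_left hACl ha3,
        mul_lt_mul_of_pos_left hAD ha4]
    -- D > 0
    have hDpos : 0 < D := by
      by_contra hh
      push_neg at hh
      have e1 : p*q*D + p*(1-q)*D + (1-p)*q*D + (1-p)*(1-q)*D = D := by ring
      linarith [mul_lt_mul_of_pos_left hAD hpq, mul_lt_mul_of_pos_left hDB ha2,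
        mul_lt_mul_of_pos_left hDC ha3]
    have RA : p*q*(A*((A^2-B^2)*((A^2-C^2)*(A^2-D^2)))) = 0 := by
      linear_combination S7 - (B^2+C^2+D^2)*S5 + (B^2*C^2+B^2*D^2+C^2*D^2)*S3 - B^2*C^2*D^2*S1
    have h1 : A*((A^2-B^2)*((A^2-C^2)*(A^2-D^2))) = 0 :=
      (mul_eq_zero.mp RA).resolve_left (ne_of_gt hpq)
    have h2 : (A^2-B^2)*((A^2-C^2)*(A^2-D^2)) = 0 :=
      (mul_eq_zero.mp h1).resolve_left (ne_of_lt hAneg)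
    -- helper : if some X with A < X < D has X = -A then D-square strict max, contra via RD
    have RD : (1-p)*(1-q)*(D*((D^2-A^2)*((D^2-B^2)*(D^2-C^2)))) = 0 := by
      linear_combination S7 - (A^2+B^2+C^2)*S5 + (A^2*B^2+A^2*C^2+B^2*C^2)*S3 - A^2*B^2*C^2*S1
    rcases mul_eq_zero.mp h2 with hF | h3
    · -- A^2 = B^2, so B = -A > 0, D > -A
      have hBmA : B = -A := by
        have : (A-B)*(A+B) = 0 := by linear_combination hF
        rcases mul_eq_zero.mp this with h | h
        · exact absurd (by linarith : A = B) hAB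
        · linarith
      have hDA2 : 0 < D^2 - A^2 := by
        have e : D^2 - A^2 = (D-A)*(D+A) := by ring
        rw [e]; exact mul_pos (by linarith) (by linarith)
      have hDB2 : 0 < D^2 - B^2 := by
        have e : D^2 - B^2 = (D-B)*(D+B) := by ring
        rw [e]; exact mul_pos (by linarith) (by linarith)
      have hDC2 : 0 < D^2 - C^2 := by
        have e : D^2 - C^2 = (D-C)*(D+C) := by ring
        rw [e]; exact mul_pos (by linarith) (by linarith)
      have hneg : 0 < D*((D^2-A^2)*((D^2-B^2)*(D^2-C^2))) :=
        mul_pos hDpos (mul_pos hDA2 (mul_pos hDB2 hDC2))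
      exact (mul_pos ha4 hneg).ne' RD
    rcases mul_eq_zero.mp h3 with hF | hF
    · -- A^2 = C^2, so C = -A > 0, D > -A
      have hCmA : C = -A := by
        have : (A-C)*(A+C) = 0 := by linear_combination hF
        rcases mul_eq_zero.mp this with h | h
        · exact absurd (by linarith : A = C) (ne_of_lt hACl)
        · linarith
      have hDA2 : 0 < D^2 - A^2 := by
        have e : D^2 - A^2 = (D-A)*(D+A) := by ring
        rw [e]; exact mul_pos (by linarith) (by linarith)
      have hDB2 : 0 < D^2 - B^2 := by
        have e : D^2 - B^2 = (D-B)*(D+B) := by ring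
        rw [e]; exact mul_pos (by linarith) (by linarith)
      have hDC2 : 0 < D^2 - C^2 := by
        have e : D^2 - C^2 = (D-C)*(D+C) := by ring
        rw [e]; exact mul_pos (by linarith) (by linarith)
      have hneg : 0 < D*((D^2-A^2)*((D^2-B^2)*(D^2-C^2))) :=
        mul_pos hDpos (mul_pos hDA2 (mul_pos hDB2 hDC2))
      exact (mul_pos ha4 hneg).ne' RD
    · -- A^2 = D^2, so D = -A ; pair relation forces p+q = 1, contra
      have hDmA : D = -A := by
        have : (A-D)*(A+D) = 0 := by linear_combination hF
        rcases mul_eq_zero.mp this with h | h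
        · exact absurd (by linarith : A = D) (ne_of_lt hAD)
        · linarith
      have PAD : p*q*(A*((A^2-B^2)*(A^2-C^2))) + (1-p)*(1-q)*(D*((D^2-B^2)*(D^2-C^2))) = 0 := by
        linear_combination S5 - (B^2+C^2)*S3 + B^2*C^2*S1
      rw [hDmA] at PAD
      have h4 : (p*q - (1-p)*(1-q))*(A*((A^2-B^2)*(A^2-C^2))) = 0 := by
        linear_combination PAD
      have hAB2 : 0 < A^2 - B^2 := by
        have e : A^2 - B^2 = (B-A)*(-(A+B)) := by ring
        rw [e]; exact mul_pos (by linarith) (by linarith)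
      have hAC2 : 0 < A^2 - C^2 := by
        have e : A^2 - C^2 = (C-A)*(-(A+C)) := by ring
        rw [e]; exact mul_pos (by linarith) (by linarith)
      have hne : p*q - (1-p)*(1-q) ≠ 0 := by intro h5; linarith
      have h5 : A*((A^2-B^2)*(A^2-C^2)) = 0 := (mul_eq_zero.mp h4).resolve_left hne
      have h6 : 0 > A*((A^2-B^2)*(A^2-C^2)) :=
        mul_neg_of_neg_of_pos hAneg (mul_pos hAB2 hAC2)
      linarith
  · -- B < A < C : C strict max, B strict min.
    have hDC : D < C := by linarith
    have hBD : B < D := by linarith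
    have hBC : B < C := by linarith
    have hCpos : 0 < C := by
      by_contra hh
      push_neg at hh
      have e1 : p*q*C + p*(1-q)*C + (1-p)*q*C + (1-p)*(1-q)*C = C := by ring
      linarith [mul_lt_mul_of_pos_left hACl hpq, mul_lt_mul_of_pos_left hBC ha2,
        mul_lt_mul_of_pos_left hDC ha4]
    have hBneg : B < 0 := by
      by_contra hh
      push_neg at hh
      have e1 : p*q*B + p*(1-q)*B + (1-p)*q*B + (1-p)*(1-q)*B = B := by ring
      linarith [mul_lt_mul_of_pos_left hBAl hpq, mul_lt_mul_of_pos_left hBC ha3,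
        mul_lt_mul_of_pos_left hBD ha4]
    have RC : (1-p)*q*(C*((C^2-A^2)*((C^2-B^2)*(C^2-D^2)))) = 0 := by
      linear_combination S7 - (A^2+B^2+D^2)*S5 + (A^2*B^2+A^2*D^2+B^2*D^2)*S3 - A^2*B^2*D^2*S1
    have RB : p*(1-q)*(B*((B^2-A^2)*((B^2-C^2)*(B^2-D^2)))) = 0 := by
      linear_combination S7 - (A^2+C^2+D^2)*S5 + (A^2*C^2+A^2*D^2+C^2*D^2)*S3 - A^2*C^2*D^2*S1
    have h1 : C*((C^2-A^2)*((C^2-B^2)*(C^2-D^2))) = 0 :=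
      (mul_eq_zero.mp RC).resolve_left (ne_of_gt ha3)
    have h2 : (C^2-A^2)*((C^2-B^2)*(C^2-D^2)) = 0 :=
      (mul_eq_zero.mp h1).resolve_left (ne_of_gt hCpos)
    rcases mul_eq_zero.mp h2 with hF | h3
    · -- C^2 = A^2, so A = -C < 0, B < -C : B-square strict max, contra via RB
      exfalso
      have hAmC : A = -C := by
        have : (C-A)*(C+A) = 0 := by linear_combination hF
        rcases mul_eq_zero.mp this with h | h
        · exact absurd (by linarith : A = C) (ne_of_lt hACl)
        · linarith
      have hBA2 : 0 < B^2 - A^2 := by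
        have e : B^2 - A^2 = (A-B)*(-(A+B)) := by ring
        rw [e]; exact mul_pos (by linarith) (by linarith)
      have hBC2 : 0 < B^2 - C^2 := by
        have e : B^2 - C^2 = (C-B)*(-(C+B)) := by ring
        rw [e]; exact mul_pos (by linarith) (by linarith)
      have hBD2 : 0 < B^2 - D^2 := by
        have e : B^2 - D^2 = (D-B)*(-(D+B)) := by ring
        rw [e]; exact mul_pos (by linarith) (by linarith)
      have hneg : B*((B^2-A^2)*((B^2-C^2)*(B^2-D^2))) < 0 :=
        mul_neg_of_neg_of_pos hBneg (mul_pos hBA2 (mul_pos hBC2 hBD2))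
      exact (mul_neg_of_pos_of_neg ha2 hneg).ne RB
    rcases mul_eq_zero.mp h3 with hF | hF
    · -- C^2 = B^2 : the genuine solution branch
      have hBmC : B = -C := by
        have : (C-B)*(C+B) = 0 := by linear_combination hF
        rcases mul_eq_zero.mp this with h | h
        · exact absurd (by linarith : B = C) (ne_of_lt hBC)
        · linarith
      have hA2 : A^2 < C^2 := by
        have e : C^2 - A^2 = (C-A)*(C+A) := by ring
        have : 0 < C^2 - A^2 := by rw [e]; exact mul_pos (by linarith) (by linarith)
        linarith
      have hD2 : D^2 < C^2 := by
        have e : C^2 - D^2 = (C-D)*(C+D) := by ring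
        have : 0 < C^2 - D^2 := by rw [e]; exact mul_pos (by linarith) (by linarith)
        linarith
      have PBC : p*(1-q)*(B*((B^2-A^2)*(B^2-D^2))) + (1-p)*q*(C*((C^2-A^2)*(C^2-D^2))) = 0 := by
        linear_combination S5 - (A^2+D^2)*S3 + A^2*D^2*S1
      rw [hBmC] at PBC
      have h4 : ((1-p)*q - p*(1-q))*(C*((C^2-A^2)*(C^2-D^2))) = 0 := by
        linear_combination PBC
      have hfac : 0 < C*((C^2-A^2)*(C^2-D^2)) :=
        mul_pos hCpos (mul_pos (by linarith) (by linarith))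
      have h5 : (1-p)*q - p*(1-q) = 0 :=
        (mul_eq_zero.mp h4).resolve_right (ne_of_gt hfac)
      have hpqeq : p = q := by linear_combination -h5
      -- now the final part
      have EA : p*q*(A*(A^2-C^2)) + (1-p)*(1-q)*(D*(D^2-C^2)) = 0 := by
        rw [hBmC] at S1 S3
        linear_combination S3 - C^2*S1
      have EA3 : p*q*(A^3*(A^2-C^2)) + (1-p)*(1-q)*(D^3*(D^2-C^2)) = 0 := by
        rw [hBmC] at S3 S5
        linear_combination S5 - C^2*S3
      obtain ⟨hA0, hD0⟩ := final_part p q A C D hpq ha4 hsum hA2 hD2 EA EA3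
      exact ⟨hpqeq, hD0, hA0⟩
    · -- C^2 = D^2, so D = -C < 0, B < -C : B-square strict max, contra via RB
      exfalso
      have hDmC : D = -C := by
        have : (C-D)*(C+D) = 0 := by linear_combination hF
        rcases mul_eq_zero.mp this with h | h
        · exact absurd (by linarith : D = C) (ne_of_lt hDC)
        · linarith
      have hBA2 : 0 < B^2 - A^2 := by
        have e : B^2 - A^2 = (A-B)*(-(A+B)) := by ring
        rw [e]; exact mul_pos (by linarith) (by linarith)
      have hBC2 : 0 < B^2 - C^2 := by
        have e : B^2 - C^2 = (C-B)*(-(C+B)) := by ring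
        rw [e]; exact mul_pos (by linarith) (by linarith)
      have hBD2 : 0 < B^2 - D^2 := by
        have e : B^2 - D^2 = (D-B)*(-(D+B)) := by ring
        rw [e]; exact mul_pos (by linarith) (by linarith)
      have hneg : B*((B^2-A^2)*((B^2-C^2)*(B^2-D^2))) < 0 :=
        mul_neg_of_neg_of_pos hBneg (mul_pos hBA2 (mul_pos hBC2 hBD2))
      exact (mul_neg_of_pos_of_neg ha2 hneg).ne RB

private lemma alg (p q A B C D : ℝ)
    (hp0 : 0 ≤ p) (hp : p < 1/2) (hq0 : 0 ≤ q) (hq : q < 1/2)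
    (hAB : A ≠ B) (hAC : A ≠ C) (hrel : A + D = B + C)
    (S1 : p*q*A + p*(1-q)*B + (1-p)*q*C + (1-p)*(1-q)*D = 0)
    (S3 : p*q*A^3 + p*(1-q)*B^3 + (1-p)*q*C^3 + (1-p)*(1-q)*D^3 = 0)
    (S5 : p*q*A^5 + p*(1-q)*B^5 + (1-p)*q*C^5 + (1-p)*(1-q)*D^5 = 0)
    (S7 : p*q*A^7 + p*(1-q)*B^7 + (1-p)*q*C^7 + (1-p)*(1-q)*D^7 = 0) :
    p = q ∧ D = 0 ∧ (0 < p → A = 0) := by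
  rcases hp0.eq_or_lt with hp0' | hp0'
  · -- p = 0
    rcases hq0.eq_or_lt with hq0' | hq0'
    · -- q = 0 : S1 gives D = 0
      refine ⟨by rw [← hp0', ← hq0'], ?_, fun h => absurd h (by rw [← hp0']; simp)⟩
      have : (1-p)*(1-q)*D = 0 := by
        rw [← hp0', ← hq0'] at S1 ⊢; linarith
      have h1 : (0:ℝ) < (1-p)*(1-q) := by
        rw [← hp0', ← hq0']; norm_num
      exact (mul_eq_zero.mp this).resolve_left (ne_of_gt h1)
    · -- q > 0 : contradiction
      exfalso
      have hCD : C ≠ D := fun h => hAB (by linarith)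
      refine two_term q C D hq0' hq hCD ?_ ?_
      · rw [← hp0'] at S1; linarith
      · rw [← hp0'] at S3; linarith
  · rcases hq0.eq_or_lt with hq0' | hq0'
    · -- p > 0, q = 0 : contradiction
      exfalso
      have hBD : B ≠ D := fun h => hAC (by linarith)
      refine two_term p B D hp0' hp hBD ?_ ?_
      · rw [← hq0'] at S1; linarith
      · rw [← hq0'] at S3; linarith
    · -- main case
      rcases lt_or_gt_of_ne hAC with h | h
      · obtain ⟨h1, h2, h3⟩ := mainA p q A B C D hp0' hp hq0' hq hrel hAB h S1 S3 S5 S7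
        exact ⟨h1, h2, fun _ => h3⟩
      · obtain ⟨h1, h2, h3⟩ := mainA p q (-A) (-B) (-C) (-D) hp0' hp hq0' hq
          (by linarith) (fun hh => hAB (by linarith)) (by linarith)
          (by linear_combination -S1) (by linear_combination -S3)
          (by linear_combination -S5) (by linear_combination -S7)
        exact ⟨h1, by linarith, fun _ => by linarith⟩

open MeasureTheory

private noncomputable def cf (μ : Measure ℝ) (t : ℝ) : ℂ :=
  ∫ x, Complex.exp (↑(t * x) * Complex.I) ∂μ

private lemma cf_cont_aux (t : ℝ) :
    Continuous (fun x : ℝ => Complex.exp (↑(t * x) * Complex.I)) := by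
  apply Complex.continuous_exp.comp
  exact (Complex.continuous_ofReal.comp (continuous_const.mul continuous_id)).mul
    continuous_const

private lemma cf_integrable (μ : Measure ℝ) [IsFiniteMeasure μ] (t : ℝ) :
    Integrable (fun x : ℝ => Complex.exp (↑(t * x) * Complex.I)) μ := by
  refine Integrable.mono' (integrable_const 1) ((cf_cont_aux t).aestronglyMeasurable) ?_
  filter_upwards with x
  rw [Complex.norm_exp_ofReal_mul_I]

private lemma cf_map_shift (ν : Measure ℝ) [IsFiniteMeasure ν] (c t : ℝ) :
    cf (ν.map (· + c)) t = Complex.exp (↑(t * c) * Complex.I) * cf ν t := by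
  rw [cf, integral_map (measurable_add_const c).aemeasurable
    ((cf_cont_aux t).aestronglyMeasurable)]
  have h : ∀ x : ℝ, Complex.exp (↑(t * (x + c)) * Complex.I)
      = Complex.exp (↑(t * c) * Complex.I) * Complex.exp (↑(t * x) * Complex.I) := by
    intro x
    rw [← Complex.exp_add]
    congr 1
    push_cast
    ring
  simp_rw [h]
  rw [integral_const_mul]
  rfl

private lemma cf_real (ν : Measure ℝ) [IsFiniteMeasure ν]
    (hs : ν.map (fun x => -x) = ν) (t : ℝ) : cf ν t = ((cf ν t).re : ℂ) := by
  have h : (starRingEnd ℂ) (cf ν t) = cf ν t := by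
    rw [cf, ← integral_conj]
    have h1 : ∀ x : ℝ, (starRingEnd ℂ) (Complex.exp (↑(t * x) * Complex.I))
        = Complex.exp (↑(t * -x) * Complex.I) := by
      intro x
      rw [← Complex.exp_conj]
      congr 1
      rw [map_mul, Complex.conj_ofReal, Complex.conj_I]
      push_cast
      ring
    simp_rw [h1]
    calc ∫ x, Complex.exp (↑(t * -x) * Complex.I) ∂ν
        = ∫ x, Complex.exp (↑(t * x) * Complex.I) ∂(ν.map (fun x => -x)) := by
          rw [integral_map measurable_neg.aemeasurable ((cf_cont_aux t).aestronglyMeasurable)]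
      _ = cf ν t := by rw [hs]; rfl
  exact ((Complex.conj_eq_iff_re.mp h)).symm

private lemma cf_zero (ν : Measure ℝ) [IsProbabilityMeasure ν] : cf ν 0 = 1 := by
  simp [cf]

private lemma cf_continuous (ν : Measure ℝ) [IsFiniteMeasure ν] : Continuous (cf ν) := by
  apply continuous_of_dominated (bound := fun _ : ℝ => (1:ℝ))
  · exact fun t => ((cf_cont_aux t).aestronglyMeasurable)
  · intro t
    filter_upwards with x
    rw [Complex.norm_exp_ofReal_mul_I]
  · exact integrable_const 1
  · filter_upwards with x
    apply Complex.continuous_exp.comp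
    exact (Complex.continuous_ofReal.comp (continuous_id.mul continuous_const)).mul
      continuous_const

open MeasureTheory

private lemma map_shift_finite (ν : Measure ℝ) [IsProbabilityMeasure ν] (c : ℝ) :
    IsProbabilityMeasure (ν.map (· + c)) :=
  Measure.isProbabilityMeasure_map (measurable_add_const c).aemeasurable

private lemma smul_finite (μ : Measure ℝ) [IsFiniteMeasure μ] (l : ℝ) :
    IsFiniteMeasure (ENNReal.ofReal l • μ) := by
  constructor
  rw [Measure.smul_apply, smul_eq_mul]
  exact ENNReal.mul_lt_top ENNReal.ofReal_lt_top (measure_lt_top μ _)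

private lemma cf_mix (ν : Measure ℝ) [IsProbabilityMeasure ν] (l m1 m2 : ℝ)
    (hl0 : 0 ≤ l) (hl1 : 1 - l ≥ 0) (t : ℝ) :
    cf (ENNReal.ofReal l • ν.map (· + m1) + ENNReal.ofReal (1-l) • ν.map (· + m2)) t
      = (↑l * Complex.exp (↑(t * m1) * Complex.I)
        + ↑(1-l) * Complex.exp (↑(t * m2) * Complex.I)) * cf ν t := by
  haveI h1 : IsProbabilityMeasure (ν.map (· + m1)) := map_shift_finite ν m1
  haveI h2 : IsProbabilityMeasure (ν.map (· + m2)) := map_shift_finite ν m2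
  haveI h3 : IsFiniteMeasure (ENNReal.ofReal l • ν.map (· + m1)) := smul_finite _ l
  haveI h4 : IsFiniteMeasure (ENNReal.ofReal (1-l) • ν.map (· + m2)) := smul_finite _ (1-l)
  rw [cf, integral_add_measure (cf_integrable _ t) (cf_integrable _ t),
    integral_smul_measure, integral_smul_measure,
    ENNReal.toReal_ofReal hl0, ENNReal.toReal_ofReal hl1]
  rw [show (∫ x, Complex.exp (↑(t * x) * Complex.I) ∂(ν.map (· + m1))) = cf (ν.map (· + m1)) t from rfl]
  rw [show (∫ x, Complex.exp (↑(t * x) * Complex.I) ∂(ν.map (· + m2))) = cf (ν.map (· + m2)) t from rfl]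
  rw [cf_map_shift, cf_map_shift]
  rw [Complex.real_smul, Complex.real_smul]
  ring

open MeasureTheory

private lemma exp_conj_exp_im (t a b : ℝ) :
    (Complex.exp (↑(t*a) * Complex.I)
      * (starRingEnd ℂ) (Complex.exp (↑(t*b) * Complex.I))).im = Real.sin ((a-b)*t) := by
  rw [← Complex.exp_conj, map_mul, Complex.conj_ofReal, Complex.conj_I, ← Complex.exp_add]
  have h : (↑(t*a) * Complex.I + ↑(t*b) * (-Complex.I)) = ↑((a-b)*t) * Complex.I := by
    push_cast; ring
  rw [h, Complex.exp_ofReal_mul_I_im]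

private lemma im_mix_prod (p q m1 m2 n1 n2 t : ℝ) :
    ((↑p * Complex.exp (↑(t*m1) * Complex.I) + ↑(1-p) * Complex.exp (↑(t*m2) * Complex.I)) *
     (starRingEnd ℂ) (↑q * Complex.exp (↑(t*n1) * Complex.I)
        + ↑(1-q) * Complex.exp (↑(t*n2) * Complex.I))).im
    = p*q * Real.sin ((m1-n1)*t) + p*(1-q) * Real.sin ((m1-n2)*t)
      + (1-p)*q * Real.sin ((m2-n1)*t) + (1-p)*(1-q) * Real.sin ((m2-n2)*t) := by
  have expand : ((↑p * Complex.exp (↑(t*m1) * Complex.I)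
      + ↑(1-p) * Complex.exp (↑(t*m2) * Complex.I)) *
     (starRingEnd ℂ) (↑q * Complex.exp (↑(t*n1) * Complex.I)
        + ↑(1-q) * Complex.exp (↑(t*n2) * Complex.I)))
    = ↑(p*q) * (Complex.exp (↑(t*m1) * Complex.I)
          * (starRingEnd ℂ) (Complex.exp (↑(t*n1) * Complex.I)))
      + ↑(p*(1-q)) * (Complex.exp (↑(t*m1) * Complex.I)
          * (starRingEnd ℂ) (Complex.exp (↑(t*n2) * Complex.I)))
      + ↑((1-p)*q) * (Complex.exp (↑(t*m2) * Complex.I)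
          * (starRingEnd ℂ) (Complex.exp (↑(t*n1) * Complex.I)))
      + ↑((1-p)*(1-q)) * (Complex.exp (↑(t*m2) * Complex.I)
          * (starRingEnd ℂ) (Complex.exp (↑(t*n2) * Complex.I))) := by
    rw [map_add, map_mul, map_mul, Complex.conj_ofReal, Complex.conj_ofReal]
    push_cast
    ring
  have him : ∀ (c : ℝ) (z : ℂ), ((↑c) * z).im = c * z.im := by
    intro c z
    simp [Complex.mul_im]
  rw [expand, Complex.add_im, Complex.add_im, Complex.add_im,
    him, him, him, him, exp_conj_exp_im, exp_conj_exp_im, exp_conj_exp_im,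
    exp_conj_exp_im]

open MeasureTheory

/-- `F` is the cumulative distribution function of a Borel probability measure on `ℝ`
that is invariant under the map `x ↦ -x`. -/
def IsSymmCDF (F : ℝ → ℝ) : Prop :=
  ∃ ν : Measure ℝ, IsProbabilityMeasure ν ∧ ν.map (fun x => -x) = ν ∧
    ∀ x : ℝ, F x = (ν (Set.Iic x)).toReal

/-- Identifiability of the two-component shifted symmetric mixture model. -/
theorem stmt_0 (lam lam' mu₁ mu₂ mu₁' mu₂' : ℝ) (F F' : ℝ → ℝ)
    (hlam : lam ∈ Set.Ico (0 : ℝ) (1 / 2)) (hlam' : lam' ∈ Set.Ico (0 : ℝ) (1 / 2))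
    (hmu : mu₁ ≠ mu₂) (hmu' : mu₁' ≠ mu₂')
    (hF : IsSymmCDF F) (hF' : IsSymmCDF F')
    (heq : ∀ x : ℝ, lam * F (x - mu₁) + (1 - lam) * F (x - mu₂)
      = lam' * F' (x - mu₁') + (1 - lam') * F' (x - mu₂')) :
    lam = lam' ∧ mu₂ = mu₂' ∧ F = F' ∧ (0 < lam → mu₁ = mu₁') := by
  obtain ⟨hl0, hl12⟩ := hlam
  obtain ⟨hl0', hl12'⟩ := hlam'
  obtain ⟨ν, hνp, hνs, hνF⟩ := hF
  obtain ⟨ν', hνp', hνs', hνF'⟩ := hF'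
  haveI := hνp
  haveI := hνp'
  have h1l : (0:ℝ) ≤ 1 - lam := by linarith
  have h1l' : (0:ℝ) ≤ 1 - lam' := by linarith
  haveI i1 : IsProbabilityMeasure (ν.map (· + mu₁)) := map_shift_finite ν mu₁
  haveI i2 : IsProbabilityMeasure (ν.map (· + mu₂)) := map_shift_finite ν mu₂
  haveI i1' : IsProbabilityMeasure (ν'.map (· + mu₁')) := map_shift_finite ν' mu₁'
  haveI i2' : IsProbabilityMeasure (ν'.map (· + mu₂')) := map_shift_finite ν' mu₂'
  haveI j1 : IsFiniteMeasure (ENNReal.ofReal lam • ν.map (· + mu₁)) := smul_finite _ lam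
  haveI j2 : IsFiniteMeasure (ENNReal.ofReal (1-lam) • ν.map (· + mu₂)) := smul_finite _ (1-lam)
  haveI j1' : IsFiniteMeasure (ENNReal.ofReal lam' • ν'.map (· + mu₁')) := smul_finite _ lam'
  haveI j2' : IsFiniteMeasure (ENNReal.ofReal (1-lam') • ν'.map (· + mu₂')) :=
    smul_finite _ (1-lam')
  have hmapIic : ∀ (μm : Measure ℝ) (c x : ℝ),
      (μm.map (· + c)) (Set.Iic x) = μm (Set.Iic (x - c)) := by
    intro μm c x
    rw [Measure.map_apply (measurable_add_const c) measurableSet_Iic]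
    congr 1
    ext y
    simp only [Set.mem_preimage, Set.mem_Iic]
    exact le_sub_iff_add_le.symm
  have hπx : ∀ x, ((ENNReal.ofReal lam • ν.map (· + mu₁)
      + ENNReal.ofReal (1-lam) • ν.map (· + mu₂)) (Set.Iic x)).toReal
      = lam * F (x - mu₁) + (1 - lam) * F (x - mu₂) := by
    intro x
    rw [Measure.add_apply, Measure.smul_apply, Measure.smul_apply, smul_eq_mul, smul_eq_mul,
      hmapIic, hmapIic,
      ENNReal.toReal_add (by exact ENNReal.mul_ne_top ENNReal.ofReal_ne_top (measure_ne_top ν _))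
        (by exact ENNReal.mul_ne_top ENNReal.ofReal_ne_top (measure_ne_top ν _)),
      ENNReal.toReal_mul, ENNReal.toReal_mul, ENNReal.toReal_ofReal hl0,
      ENNReal.toReal_ofReal h1l, hνF, hνF]
  have hπ'x : ∀ x, ((ENNReal.ofReal lam' • ν'.map (· + mu₁')
      + ENNReal.ofReal (1-lam') • ν'.map (· + mu₂')) (Set.Iic x)).toReal
      = lam' * F' (x - mu₁') + (1 - lam') * F' (x - mu₂') := by
    intro x
    rw [Measure.add_apply, Measure.smul_apply, Measure.smul_apply, smul_eq_mul, smul_eq_mul,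
      hmapIic, hmapIic,
      ENNReal.toReal_add (by exact ENNReal.mul_ne_top ENNReal.ofReal_ne_top (measure_ne_top ν' _))
        (by exact ENNReal.mul_ne_top ENNReal.ofReal_ne_top (measure_ne_top ν' _)),
      ENNReal.toReal_mul, ENNReal.toReal_mul, ENNReal.toReal_ofReal hl0',
      ENNReal.toReal_ofReal h1l', hνF', hνF']
  have hππ' : (ENNReal.ofReal lam • ν.map (· + mu₁) + ENNReal.ofReal (1-lam) • ν.map (· + mu₂))
      = (ENNReal.ofReal lam' • ν'.map (· + mu₁')
        + ENNReal.ofReal (1-lam') • ν'.map (· + mu₂')) := by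
    apply Measure.ext_of_Iic
    intro x
    have h1 := heq x
    rw [← hπx x, ← hπ'x x] at h1
    exact (ENNReal.toReal_eq_toReal_iff' (measure_ne_top _ _) (measure_ne_top _ _)).mp h1
  have hcfeq : ∀ t : ℝ,
      (↑lam * Complex.exp (↑(t*mu₁) * Complex.I)
        + ↑(1-lam) * Complex.exp (↑(t*mu₂) * Complex.I)) * cf ν t
      = (↑lam' * Complex.exp (↑(t*mu₁') * Complex.I)
        + ↑(1-lam') * Complex.exp (↑(t*mu₂') * Complex.I)) * cf ν' t := by
    intro t
    calc (↑lam * Complex.exp (↑(t*mu₁) * Complex.I)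
        + ↑(1-lam) * Complex.exp (↑(t*mu₂) * Complex.I)) * cf ν t
        = cf (ENNReal.ofReal lam • ν.map (· + mu₁)
            + ENNReal.ofReal (1-lam) • ν.map (· + mu₂)) t :=
          (cf_mix ν lam mu₁ mu₂ hl0 h1l t).symm
      _ = cf (ENNReal.ofReal lam' • ν'.map (· + mu₁')
            + ENNReal.ofReal (1-lam') • ν'.map (· + mu₂')) t := by rw [hππ']
      _ = _ := cf_mix ν' lam' mu₁' mu₂' hl0' h1l' t
  -- positivity of the real part of cf ν near 0
  have hcont : Continuous fun t => (cf ν t).re := Complex.continuous_re.comp (cf_continuous ν)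
  have h0 : (cf ν 0).re = 1 := by rw [cf_zero]; simp
  have hev : ∀ᶠ t in nhds (0:ℝ), 0 < (cf ν t).re := by
    have ht : Filter.Tendsto (fun t => (cf ν t).re) (nhds 0) (nhds 1) := by
      have := hcont.continuousAt (x := (0:ℝ))
      rw [ContinuousAt] at this
      simpa [h0] using this
    exact ht.eventually_const_lt (by norm_num)
  -- the sine identity near 0
  have hsin : ∀ᶠ t in nhds (0:ℝ),
      lam*lam' * Real.sin ((mu₁-mu₁') * t) + lam*(1-lam') * Real.sin ((mu₁-mu₂') * t)
      + (1-lam)*lam' * Real.sin ((mu₂-mu₁') * t)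
      + (1-lam)*(1-lam') * Real.sin ((mu₂-mu₂') * t) = 0 := by
    filter_upwards [hev] with t ht
    have h2 := hcfeq t
    rw [cf_real ν hνs t, cf_real ν' hνs' t] at h2
    have e1 := congrArg (fun z => (z * (starRingEnd ℂ)
      (↑lam' * Complex.exp (↑(t*mu₁') * Complex.I)
        + ↑(1-lam') * Complex.exp (↑(t*mu₂') * Complex.I))).im) h2
    set Nt := (↑lam' * Complex.exp (↑(t*mu₁') * Complex.I)
        + ↑(1-lam') * Complex.exp (↑(t*mu₂') * Complex.I)) with hNt
    -- right side is real
    have eR : ((Nt * ↑((cf ν' t).re)) * (starRingEnd ℂ) Nt).im = 0 := by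
      have : (Nt * ↑((cf ν' t).re)) * (starRingEnd ℂ) Nt
          = ↑((cf ν' t).re) * (Nt * (starRingEnd ℂ) Nt) := by ring
      rw [this, Complex.mul_conj, ← Complex.ofReal_mul, Complex.ofReal_im]
    -- left side
    have eL : (((↑lam * Complex.exp (↑(t*mu₁) * Complex.I)
        + ↑(1-lam) * Complex.exp (↑(t*mu₂) * Complex.I)) * ↑((cf ν t).re))
          * (starRingEnd ℂ) Nt).im
        = (cf ν t).re * (lam*lam' * Real.sin ((mu₁-mu₁') * t)
          + lam*(1-lam') * Real.sin ((mu₁-mu₂') * t)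
          + (1-lam)*lam' * Real.sin ((mu₂-mu₁') * t)
          + (1-lam)*(1-lam') * Real.sin ((mu₂-mu₂') * t)) := by
      have : ((↑lam * Complex.exp (↑(t*mu₁) * Complex.I)
        + ↑(1-lam) * Complex.exp (↑(t*mu₂) * Complex.I)) * ↑((cf ν t).re))
          * (starRingEnd ℂ) Nt
          = ↑((cf ν t).re) * ((↑lam * Complex.exp (↑(t*mu₁) * Complex.I)
        + ↑(1-lam) * Complex.exp (↑(t*mu₂) * Complex.I)) * (starRingEnd ℂ) Nt) := by ring
      rw [this]
      have him : ∀ (c : ℝ) (z : ℂ), ((↑c) * z).im = c * z.im := by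
        intro c z
        simp [Complex.mul_im]
      rw [him, hNt, im_mix_prod]
    rw [eL, eR] at e1
    exact (mul_eq_zero.mp e1).resolve_left (ne_of_gt ht)
  obtain ⟨S1, S3, S5, S7⟩ := extract (lam*lam') (lam*(1-lam')) ((1-lam)*lam')
    ((1-lam)*(1-lam')) (mu₁-mu₁') (mu₁-mu₂') (mu₂-mu₁') (mu₂-mu₂') hsin
  obtain ⟨hpq, hD0, hA0⟩ := alg lam lam' (mu₁-mu₁') (mu₁-mu₂') (mu₂-mu₁') (mu₂-mu₂')
    hl0 hl12 hl0' hl12'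
    (fun h => hmu' (by linarith)) (fun h => hmu (by linarith)) (by ring) S1 S3 S5 S7
  have hmu₂ : mu₂ = mu₂' := by linarith
  have hmu₁ : 0 < lam → mu₁ = mu₁' := fun h => by have := hA0 h; linarith
  have hFF' : F = F' := by
    rcases hl0.eq_or_lt with h0l | h0l
    · -- lam = 0 (and then lam' = 0)
      funext y
      have h := heq (y + mu₂)
      rw [← hpq, ← hmu₂, ← h0l] at h
      simpa using h
    · -- 0 < lam : contraction argument
      have hm1 := hmu₁ h0l
      have h1lpos : (0:ℝ) < 1 - lam := by linarith
      have hr0 : 0 < lam / (1-lam) := div_pos h0l h1lpos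
      have hr1 : lam / (1-lam) < 1 := (div_lt_one h1lpos).mpr (by linarith)
      have habs : ∀ y, |F y - F' y|
          = (lam / (1-lam)) * |F (y + (mu₂ - mu₁)) - F' (y + (mu₂ - mu₁))| := by
        intro y
        have h := heq (y + mu₂)
        rw [← hpq, ← hmu₂, ← hm1] at h
        have hy2 : y + mu₂ - mu₂ = y := by ring
        have hy1 : y + mu₂ - mu₁ = y + (mu₂ - mu₁) := by ring
        rw [hy1, hy2] at h
        have h2 : F y - F' y
            = (-(lam / (1-lam))) * (F (y + (mu₂ - mu₁)) - F' (y + (mu₂ - mu₁))) := by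
          field_simp
          linarith
        rw [h2, abs_mul, abs_neg, abs_of_pos hr0]
      have hb : ∀ y, |F y - F' y| ≤ 2 := by
        intro y
        have b1 : 0 ≤ F y := by rw [hνF]; exact ENNReal.toReal_nonneg
        have b2 : F y ≤ 1 := by
          rw [hνF]
          exact ENNReal.toReal_le_of_le_ofReal (by norm_num) (by simpa using prob_le_one)
        have b3 : 0 ≤ F' y := by rw [hνF']; exact ENNReal.toReal_nonneg
        have b4 : F' y ≤ 1 := by
          rw [hνF']
          exact ENNReal.toReal_le_of_le_ofReal (by norm_num) (by simpa using prob_le_one)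
        rw [abs_le]
        constructor <;> linarith
      have hind : ∀ n : ℕ, ∀ y, |F y - F' y| ≤ 2 * (lam / (1-lam))^n := by
        intro n
        induction n with
        | zero => simpa using hb
        | succ n ih =>
          intro y
          rw [habs y]
          calc (lam / (1-lam)) * |F (y + (mu₂ - mu₁)) - F' (y + (mu₂ - mu₁))|
              ≤ (lam / (1-lam)) * (2 * (lam / (1-lam))^n) :=
                mul_le_mul_of_nonneg_left (ih _) hr0.le
            _ = 2 * (lam / (1-lam))^(n+1) := by ring
      funext y
      have hlim : Filter.Tendsto (fun n : ℕ => 2 * (lam / (1-lam))^n)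
          Filter.atTop (nhds 0) := by
        simpa using (tendsto_pow_atTop_nhds_zero_of_lt_one hr0.le hr1).const_mul 2
      have hle : |F y - F' y| ≤ 0 := ge_of_tendsto' hlim (fun n => hind n y)
      have : F y - F' y = 0 := by
        have := abs_nonneg (F y - F' y)
        have h3 : |F y - F' y| = 0 := le_antisymm hle this
        exact abs_eq_zero.mp h3
      linarith
  exact ⟨hpq, hmu₂, hFF', hmu₁⟩
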